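/- Let γ = γ_{m₁,…,m_r} ∈ S_m be the product of the r directed cycles (1,…,m₁)(m₁+1,…,m₁+m₂)⋯(m₁+⋯+m_{r−1}+1,…,m). Suppose π, σ ∈ S_m satisfy π ≲ γ and σ ≲ γ (non-crossing on each block of the respective joins with γ), and π ∨ γ = σ ∨ γ as partitions. If π ≤ σ⁻¹γ, then σ ≤ γπ⁻¹. -/

import Mathlib

open Equiv

namespace ThirdOrderFree

variable {α : Type*}

/-- The setoid whose classes are the cycles (orbits) of a permutation. -/
def sameCycleSetoid (σ : Perm α) : Setoid α :=
  ⟨σ.SameCycle,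
    ⟨fun x => Equiv.Perm.SameCycle.refl σ x, fun h => h.symm, fun h h' => h.trans h'⟩⟩

/-- Number of cycles (orbits, including fixed points) of a permutation. -/
noncomputable def numCycles (σ : Perm α) : ℕ :=
  Nat.card (Quotient (sameCycleSetoid σ))

/-- The length `|σ| = n - #(σ)`. -/
noncomputable def len (σ : Perm α) : ℕ :=
  Nat.card α - numCycles σ

/-- Join of the cycle partitions of two permutations. -/
def joinSetoid (π σ : Perm α) : Setoid α :=
  sameCycleSetoid π ⊔ sameCycleSetoid σ

/-- Number of blocks of `π ∨ σ`. -/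
noncomputable def numBlocks (π σ : Perm α) : ℕ :=
  Nat.card (Quotient (joinSetoid π σ))

/-- `π ∨ σ` is the one-block partition. -/
def JoinTop (π σ : Perm α) : Prop :=
  ∀ x y : α, (joinSetoid π σ).r x y

/-- `π` is a non-crossing (annular) permutation with respect to `γ`. -/
def SNC (γ π : Perm α) : Prop :=
  JoinTop π γ ∧
    numCycles π + numCycles (π⁻¹ * γ) + numCycles γ = Nat.card α + 2

/-- `τ` separates the points of `N`: no cycle of `τ` contains two distinct points of `N`. -/
def Separates (τ : Perm α) (N : Set α) : Prop :=
  ∀ x ∈ N, ∀ y ∈ N, τ.SameCycle x y → x = y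

/-- The first-return map of `σ` on the set `{x | p x}`. -/
noncomputable def firstReturn (σ : Perm α) (p : α → Prop) (x : α) : α :=
  (σ ^ sInf {k : ℕ | 0 < k ∧ p ((σ ^ k) x)}) x

open Classical in
/-- The restriction of `σ` to `{x | p x}`: the unique permutation agreeing with the
first-return map (it exists whenever `α` is finite). -/
noncomputable def restrictPerm (σ : Perm α) (p : α → Prop) : Perm {x // p x} :=
  if h : ∃ e : Perm {x // p x}, ∀ x : {x // p x}, (e x : α) = firstReturn σ p (x : α)
  then h.choose else 1

/-- `π ≤ σ` : each cycle of `π` is contained in a cycle of `σ` and on each cycle of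
`σ` the restriction of `π` is a non-crossing permutation of that cycle. -/
def le' (π σ : Perm α) : Prop :=
  (∀ x y : α, π.SameCycle x y → σ.SameCycle x y) ∧
  ∀ x : α,
    numCycles (restrictPerm π (σ.SameCycle x)) +
      numCycles ((restrictPerm π (σ.SameCycle x))⁻¹ * restrictPerm σ (σ.SameCycle x)) =
      Nat.card {y // σ.SameCycle x y} + 1

/-- `π ≲ σ` : on each block of `π ∨ σ`, `π` is annular non-crossing w.r.t. `σ`. -/
def ncRel (π σ : Perm α) : Prop :=
  ∀ x : α,
    SNC (restrictPerm σ ((joinSetoid π σ).r x)) (restrictPerm π ((joinSetoid π σ).r x))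

/-- The permutation of `Σ i, Fin (n i)` rotating each block: the product of the
directed cycles `T i` of lengths `n i`. -/
def blockRotate {ι : Type*} (n : ι → ℕ) : Perm ((i : ι) × Fin (n i)) :=
  Equiv.sigmaCongrRight fun i => finRotate (n i)

/-- The first elements of the blocks. -/
def zeroSection {ι : Type*} (n : ι → ℕ) (hn : ∀ i, 0 < n i) :
    ι ≃ {x : (i : ι) × Fin (n i) // x.2.val = 0} where
  toFun i := ⟨⟨i, ⟨0, hn i⟩⟩, rfl⟩
  invFun x := x.1.1
  left_inv i := rfl
  right_inv := fun x => by
    obtain ⟨⟨i, j⟩, hj⟩ := x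
    exact Subtype.ext (congrArg (Sigma.mk i) (Fin.ext hj.symm))

/-- `π_{\vec n}` : merge the blocks `T i` along the cycles of `π`; within a block it
moves forward, and the last element of block `i` is sent to the first element of
block `π i`. -/
def mergePerm {ι : Type*} (n : ι → ℕ) (hn : ∀ i, 0 < n i) (π : Perm ι) :
    Perm ((i : ι) × Fin (n i)) :=
  (π.extendDomain (zeroSection n hn)) * blockRotate n


section Aux

variable {β : Type*}




lemma rel_zpow {f : Perm α} {s : Setoid α} (h : ∀ z : α, s.r z (f z)) (x : α) :
    ∀ k : ℤ, s.r x ((f ^ k) x) := by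
  have hinv : ∀ z : α, s.r z (f⁻¹ z) := fun z => s.symm' (by simpa using h (f⁻¹ z))
  intro k
  induction k using Int.induction_on with
  | zero => simpa using s.refl' x
  | succ n ih =>
      have e : (f ^ ((n : ℤ) + 1)) x = f ((f ^ (n : ℤ)) x) := by
        rw [add_comm, zpow_one_add]; rfl
      rw [e]; exact s.trans' ih (h _)
  | pred n ih =>
      have e : (f ^ (-(n : ℤ) - 1)) x = f⁻¹ ((f ^ (-(n : ℤ))) x) := by
        have h' : (-(n : ℤ) - 1) = (-1) + (-(n : ℤ)) := by ring
        rw [h', zpow_add, zpow_neg_one]; rfl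
      rw [e]; exact s.trans' ih (hinv _)

lemma rel_of_sameCycle {f : Perm α} {s : Setoid α} (h : ∀ z : α, s.r z (f z)) {x y : α}
    (hxy : f.SameCycle x y) : s.r x y := by
  obtain ⟨k, hk⟩ := hxy; exact hk ▸ rel_zpow h x k

lemma sameCycleSetoid_le {f : Perm α} {s : Setoid α} (h : ∀ z : α, s.r z (f z)) :
    sameCycleSetoid f ≤ s :=
  Setoid.le_def.mpr fun hxy => rel_of_sameCycle h hxy

lemma sameCycle_apply (f : Perm α) (z : α) : f.SameCycle z (f z) := ⟨1, by simp⟩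

lemma join_rel_left {π σ : Perm α} {x y : α} (h : π.SameCycle x y) :
    (joinSetoid π σ).r x y :=
  Setoid.le_def.mp (le_sup_left (a := sameCycleSetoid π) (b := sameCycleSetoid σ)) h

lemma join_rel_right {π σ : Perm α} {x y : α} (h : σ.SameCycle x y) :
    (joinSetoid π σ).r x y :=
  Setoid.le_def.mp (le_sup_right (a := sameCycleSetoid π) (b := sameCycleSetoid σ)) h

lemma numCycles_eq_of_equiv {f : Perm α} {g : Perm β} (e : α ≃ β)
    (he : ∀ x y : α, f.SameCycle x y ↔ g.SameCycle (e x) (e y)) :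
    numCycles f = numCycles g := by
  have wd : ∀ a b : α, (sameCycleSetoid f).r a b →
      (Quotient.mk (sameCycleSetoid g) (e a)) = Quotient.mk (sameCycleSetoid g) (e b) :=
    fun a b hab => Quotient.sound ((he a b).mp hab)
  apply Nat.card_eq_of_bijective
    (Quotient.lift (fun x => Quotient.mk (sameCycleSetoid g) (e x)) wd)
  constructor
  · intro q q'
    induction q using Quotient.ind
    induction q' using Quotient.ind
    rename_i a b
    intro hab
    exact Quotient.sound ((he a b).mpr (Quotient.exact hab))
  · intro q
    induction q using Quotient.ind
    rename_i b
    exact ⟨Quotient.mk _ (e.symm b), by simp⟩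

lemma numCycles_conj (a b : Perm α) : numCycles (a * b * a⁻¹) = numCycles b := by
  refine (numCycles_eq_of_equiv (a : Perm α) (fun x y => ?_)).symm
  constructor
  · rintro ⟨k, hk⟩
    exact ⟨k, by rw [conj_zpow]; simp [Equiv.Perm.mul_apply, hk]⟩
  · rintro ⟨k, hk⟩
    rw [conj_zpow] at hk
    simp only [Equiv.Perm.mul_apply] at hk
    rw [show ∀ z, a⁻¹ (a z) = z from fun z => a.symm_apply_apply z] at hk
    exact ⟨k, a.injective hk⟩

lemma numCycles_one : numCycles (1 : Perm α) = Nat.card α := by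
  symm
  apply Nat.card_eq_of_bijective (Quotient.mk (sameCycleSetoid (1 : Perm α)))
  refine ⟨fun a b hab => ?_, fun q => Quotient.exists_rep q⟩
  exact (Equiv.Perm.sameCycle_one.mp (Quotient.exact hab))



/-- The setoid obtained from `s` by merging the classes of `u` and `v`. -/
def pairJoin (s : Setoid α) (u v : α) : Setoid α where
  r z w := s.r z w ∨ (s.r z u ∧ s.r v w) ∨ (s.r z v ∧ s.r u w)
  iseqv := by
    constructor
    · exact fun z => Or.inl (s.refl' z)
    · rintro z w (h | ⟨h1, h2⟩ | ⟨h1, h2⟩)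
      · exact Or.inl (s.symm' h)
      · exact Or.inr (Or.inr ⟨s.symm' h2, s.symm' h1⟩)
      · exact Or.inr (Or.inl ⟨s.symm' h2, s.symm' h1⟩)
    · rintro z w w' (h | ⟨h1, h2⟩ | ⟨h1, h2⟩) (h' | ⟨h1', h2'⟩ | ⟨h1', h2'⟩)
      · exact Or.inl (s.trans' h h')
      · exact Or.inr (Or.inl ⟨s.trans' h h1', h2'⟩)
      · exact Or.inr (Or.inr ⟨s.trans' h h1', h2'⟩)
      · exact Or.inr (Or.inl ⟨h1, s.trans' h2 h'⟩)
      · exact Or.inl (s.trans' (s.trans' h1 (s.symm' (s.trans' h2 h1'))) h2')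
      · exact Or.inl (s.trans' h1 h2')
      · exact Or.inr (Or.inr ⟨h1, s.trans' h2 h'⟩)
      · exact Or.inl (s.trans' h1 h2')
      · exact Or.inl (s.trans' (s.trans' h1 (s.symm' (s.trans' h2 h1'))) h2')

lemma pairJoin_rel {s : Setoid α} {u v z w : α} :
    (pairJoin s u v).r z w ↔
      s.r z w ∨ (s.r z u ∧ s.r v w) ∨ (s.r z v ∧ s.r u w) := Iff.rfl

lemma le_pairJoin (s : Setoid α) (u v : α) : s ≤ pairJoin s u v :=
  Setoid.le_def.mpr fun h => Or.inl h

lemma card_quot_le_of_le [Finite α] {s t : Setoid α} (h : s ≤ t) :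
    Nat.card (Quotient t) ≤ Nat.card (Quotient s) := by
  have wd : ∀ a b : α, (s.r a b) → Quotient.mk t a = Quotient.mk t b :=
    fun a b hab => Quotient.sound (Setoid.le_def.mp h hab)
  apply Nat.card_le_card_of_surjective (Quotient.lift (Quotient.mk t) wd)
  intro q
  induction q using Quotient.ind
  rename_i b
  exact ⟨Quotient.mk _ b, rfl⟩

lemma card_quot_le_pair [Finite α] {s t : Setoid α} {u v : α}
    (hst : s ≤ t) (hts : t ≤ pairJoin s u v) :
    Nat.card (Quotient s) ≤ Nat.card (Quotient t) + 1 := by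
  classical
  let F : α → (Quotient t ⊕ Unit) := fun a =>
    if s.r a v then Sum.inr () else Sum.inl (Quotient.mk t a)
  have wd : ∀ a b : α, s.r a b → F a = F b := by
    intro a b hab
    show (if s.r a v then (Sum.inr () : Quotient t ⊕ Unit) else Sum.inl (Quotient.mk t a)) =
      if s.r b v then Sum.inr () else Sum.inl (Quotient.mk t b)
    by_cases hav : s.r a v
    · rw [if_pos hav, if_pos (s.trans' (s.symm' hab) hav)]
    · rw [if_neg hav, if_neg (fun hbv => hav (s.trans' hab hbv))]
      exact congrArg Sum.inl (Quotient.sound (Setoid.le_def.mp hst hab))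
  have hinj : Function.Injective (Quotient.lift F wd) := by
    intro q q'
    induction q using Quotient.ind
    induction q' using Quotient.ind
    rename_i a b
    simp only [Quotient.lift_mk]
    show F a = F b → _
    simp only [F]
    by_cases hav : s.r a v <;> by_cases hbv : s.r b v
    · intro _; exact Quotient.sound (s.trans' hav (s.symm' hbv))
    · rw [if_pos hav, if_neg hbv]; intro hc; exact absurd hc (by simp)
    · rw [if_neg hav, if_pos hbv]; intro hc; exact absurd hc (by simp)
    · rw [if_neg hav, if_neg hbv]
      intro hc
      have hc' : Quotient.mk t a = Quotient.mk t b := by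
        simpa using hc
      have := Setoid.le_def.mp hts (Quotient.exact hc')
      rcases this with h | ⟨h1, h2⟩ | ⟨h1, h2⟩
      · exact Quotient.sound h
      · exact absurd (s.symm' h2) hbv
      · exact absurd h1 hav
  calc Nat.card (Quotient s) ≤ Nat.card (Quotient t ⊕ Unit) :=
        Nat.card_le_card_of_injective _ hinj
    _ = Nat.card (Quotient t) + 1 := by
        rw [Nat.card_sum]; simp



lemma period_exists [Finite α] (ρ : Perm α) (v : α) : ∃ k, 0 < k ∧ (ρ ^ k) v = v := by
  refine ⟨orderOf ρ, orderOf_pos ρ, ?_⟩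
  rw [pow_orderOf_eq_one]; rfl

lemma zpow_mod_period {ρ : Perm α} {v : α} {N : ℕ} (hN : 0 < N) (hfix : (ρ ^ N) v = v)
    (k : ℤ) : ∃ r : ℕ, r < N ∧ (ρ ^ k) v = (ρ ^ r) v := by
  have hNz : (N : ℤ) ≠ 0 := by exact_mod_cast hN.ne'
  have hmod : 0 ≤ k % (N : ℤ) := Int.emod_nonneg k hNz
  have hlt : k % (N : ℤ) < N := Int.emod_lt_of_pos k (by exact_mod_cast hN)
  refine ⟨(k % (N : ℤ)).toNat, by omega, ?_⟩
  have hfixz : ∀ q : ℤ, ((ρ ^ (N : ℤ)) ^ q) v = v := by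
    intro q
    have h1 : (ρ ^ (N : ℤ)) v = v := by rw [zpow_natCast]; exact hfix
    exact Equiv.Perm.zpow_apply_eq_self_of_apply_eq_self h1 q
  have hdecomp : k = (k % (N : ℤ)) + (N : ℤ) * (k / (N : ℤ)) := by
    rw [add_comm]; exact (Int.mul_ediv_add_emod k (N : ℤ)).symm
  calc (ρ ^ k) v = (ρ ^ ((k % (N : ℤ)) + (N : ℤ) * (k / (N : ℤ)))) v := by rw [← hdecomp]
    _ = (ρ ^ (k % (N : ℤ))) ((ρ ^ ((N : ℤ) * (k / (N : ℤ)))) v) := by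
        rw [zpow_add]; rfl
    _ = (ρ ^ (k % (N : ℤ))) v := by rw [zpow_mul, hfixz]
    _ = (ρ ^ ((k % (N : ℤ)).toNat)) v := by
        rw [← zpow_natCast, Int.toNat_of_nonneg hmod]

lemma walk_aux [DecidableEq α] (ρ : Perm α) (u v : α) (N : ℕ)
    (hmin : ∀ j, 0 < j → j < N → (ρ ^ j) v ≠ u ∧ (ρ ^ j) v ≠ v) :
    ∀ j, j < N → ((swap u v * ρ) ^ j) v = (ρ ^ j) v := by
  intro j hj
  induction j with
  | zero => simp
  | succ i ih =>
    have hi : i < N := lt_trans (Nat.lt_succ_self i) hj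
    rw [pow_succ', Equiv.Perm.mul_apply, ih hi, Equiv.Perm.mul_apply]
    have e2 : ρ ((ρ ^ i) v) = (ρ ^ (i + 1)) v := by
      rw [pow_succ', Equiv.Perm.mul_apply]
    rw [e2]
    have hm := hmin (i + 1) (Nat.succ_pos i) hj
    exact swap_apply_of_ne_of_ne hm.1 hm.2

/-- If `u` and `v` are in different cycles of `ρ`, they are in the same cycle of
`swap u v * ρ`. -/
lemma key_merge [Finite α] [DecidableEq α] {ρ : Perm α} {u v : α}
    (h : ¬ ρ.SameCycle u v) : (swap u v * ρ).SameCycle v u := by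
  classical
  have hex := period_exists ρ v
  set N := Nat.find hex with hNdef
  obtain ⟨hNpos, hNfix⟩ := Nat.find_spec hex
  have hmin : ∀ j, 0 < j → j < N → (ρ ^ j) v ≠ u ∧ (ρ ^ j) v ≠ v := by
    intro j hj0 hjN
    constructor
    · intro he
      exact h (Perm.SameCycle.symm ⟨(j : ℤ), by rw [zpow_natCast]; exact he⟩)
    · intro he
      exact Nat.find_min hex hjN ⟨hj0, he⟩
  have hW := walk_aux ρ u v N hmin
  refine ⟨(N : ℤ), ?_⟩
  rw [zpow_natCast]
  have hN1 : N - 1 + 1 = N := Nat.succ_pred_eq_of_pos hNpos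
  have hstep : ((swap u v * ρ) ^ N) v = swap u v (ρ ((ρ ^ (N - 1)) v)) := by
    conv_lhs => rw [← hN1]
    rw [pow_succ', Equiv.Perm.mul_apply, hW (N - 1) (by omega), Equiv.Perm.mul_apply]
  have hρN : ρ ((ρ ^ (N - 1)) v) = v := by
    have : ρ ((ρ ^ (N - 1)) v) = (ρ ^ (N - 1 + 1)) v := by
      rw [pow_succ', Equiv.Perm.mul_apply]
    rw [this, hN1]; exact hNfix
  rw [hstep, hρN, swap_apply_right]

/-- If `u ≠ v` are in the same cycle of `ρ`, they are in different cycles of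
`swap u v * ρ`. -/
lemma key_split [Finite α] [DecidableEq α] {ρ : Perm α} {u v : α} (huv : u ≠ v)
    (h : ρ.SameCycle u v) : ¬ (swap u v * ρ).SameCycle v u := by
  classical
  have hex : ∃ k, 0 < k ∧ ((ρ ^ k) v = u ∨ (ρ ^ k) v = v) := by
    obtain ⟨k, hk0, hkv⟩ := period_exists ρ v
    exact ⟨k, hk0, Or.inr hkv⟩
  set N := Nat.find hex with hNdef
  obtain ⟨hNpos, hNuv⟩ := Nat.find_spec hex
  have hmin : ∀ j, 0 < j → j < N → (ρ ^ j) v ≠ u ∧ (ρ ^ j) v ≠ v := by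
    intro j hj0 hjN
    constructor
    · intro he; exact Nat.find_min hex hjN ⟨hj0, Or.inl he⟩
    · intro he; exact Nat.find_min hex hjN ⟨hj0, Or.inr he⟩
  -- first show `(ρ ^ N) v = u`
  have hNu : (ρ ^ N) v = u := by
    rcases hNuv with hNu | hNv
    · exact hNu
    · -- `v` returns to itself before meeting `u`, contradicting `SameCycle ρ u v`
      exfalso
      obtain ⟨i, hi⟩ := Perm.SameCycle.symm h
      obtain ⟨r, hrN, hr⟩ := zpow_mod_period hNpos hNv i
      rw [hi] at hr
      rcases Nat.eq_zero_or_pos r with hr0 | hr0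
      · rw [hr0] at hr; simp at hr; exact huv hr
      · exact (hmin r hr0 hrN).1 hr.symm
  have hW := walk_aux ρ u v N hmin
  have hfixv : ((swap u v * ρ) ^ N) v = v := by
    have hN1 : N - 1 + 1 = N := Nat.succ_pred_eq_of_pos hNpos
    have hstep : ((swap u v * ρ) ^ N) v = swap u v (ρ ((ρ ^ (N - 1)) v)) := by
      conv_lhs => rw [← hN1]
      rw [pow_succ', Equiv.Perm.mul_apply, hW (N - 1) (by omega), Equiv.Perm.mul_apply]
    have hρN : ρ ((ρ ^ (N - 1)) v) = u := by
      have : ρ ((ρ ^ (N - 1)) v) = (ρ ^ (N - 1 + 1)) v := by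
        rw [pow_succ', Equiv.Perm.mul_apply]
      rw [this, hN1]; exact hNu
    rw [hstep, hρN, swap_apply_left]
  rintro ⟨i, hi⟩
  obtain ⟨r, hrN, hr⟩ := zpow_mod_period hNpos hfixv i
  rw [hi] at hr
  rcases Nat.eq_zero_or_pos r with hr0 | hr0
  · rw [hr0] at hr; simp at hr; exact huv hr
  · rw [hW r hrN] at hr
    exact (hmin r hr0 hrN).1 hr.symm


/-- Multiplying by a transposition joining two different cycles decreases the number of
cycles by exactly one. -/
lemma numCycles_swap_mul_of_not_sameCycle [Finite α] [DecidableEq α] {ρ : Perm α} {u v : α}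
    (h : ¬ ρ.SameCycle u v) :
    numCycles (swap u v * ρ) + 1 = numCycles ρ := by
  classical
  set ρ' := swap u v * ρ with hρ'
  have huv' : ρ'.SameCycle v u := key_merge h
  have hstep : ∀ z : α, (sameCycleSetoid ρ').r z (ρ z) := by
    intro z
    by_cases h1 : ρ z = u
    · have hz : ρ' z = v := by rw [hρ', Equiv.Perm.mul_apply, h1, swap_apply_left]
      have h3 : ρ'.SameCycle z v := hz ▸ sameCycle_apply ρ' z
      exact h1 ▸ Perm.SameCycle.trans h3 huv'
    · by_cases h2 : ρ z = v
      · have hz : ρ' z = u := by rw [hρ', Equiv.Perm.mul_apply, h2, swap_apply_right]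
        have h3 : ρ'.SameCycle z u := hz ▸ sameCycle_apply ρ' z
        exact h2 ▸ Perm.SameCycle.trans h3 huv'.symm
      · have hz : ρ' z = ρ z := by
          rw [hρ', Equiv.Perm.mul_apply, swap_apply_of_ne_of_ne h1 h2]
        exact hz ▸ sameCycle_apply ρ' z
  have hmono : ∀ {z w : α}, ρ.SameCycle z w → ρ'.SameCycle z w :=
    fun hzw => rel_of_sameCycle hstep hzw
  have hstep' : ∀ z : α, (pairJoin (sameCycleSetoid ρ) u v).r z (ρ' z) := by
    intro z
    by_cases h1 : ρ z = u
    · have hz : ρ' z = v := by rw [hρ', Equiv.Perm.mul_apply, h1, swap_apply_left]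
      rw [hz]
      exact Or.inr (Or.inl ⟨h1 ▸ sameCycle_apply ρ z, Equiv.Perm.SameCycle.refl ρ v⟩)
    · by_cases h2 : ρ z = v
      · have hz : ρ' z = u := by rw [hρ', Equiv.Perm.mul_apply, h2, swap_apply_right]
        rw [hz]
        exact Or.inr (Or.inr ⟨h2 ▸ sameCycle_apply ρ z, Equiv.Perm.SameCycle.refl ρ u⟩)
      · have hz : ρ' z = ρ z := by
          rw [hρ', Equiv.Perm.mul_apply, swap_apply_of_ne_of_ne h1 h2]
        rw [hz]; exact Or.inl (sameCycle_apply ρ z)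
  have hstruct : ∀ {z w : α}, ρ'.SameCycle z w →
      (pairJoin (sameCycleSetoid ρ) u v).r z w :=
    fun hzw => rel_of_sameCycle hstep' hzw
  let F : α → (Quotient (sameCycleSetoid ρ') ⊕ Unit) := fun z =>
    if ρ.SameCycle z v then Sum.inr () else Sum.inl (Quotient.mk _ z)
  have wd : ∀ a b : α, (sameCycleSetoid ρ).r a b → F a = F b := by
    intro a b hab
    have hab' : ρ.SameCycle a b := hab
    show (if ρ.SameCycle a v then (Sum.inr () : Quotient (sameCycleSetoid ρ') ⊕ Unit)
        else Sum.inl (Quotient.mk _ a)) =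
      (if ρ.SameCycle b v then (Sum.inr () : Quotient (sameCycleSetoid ρ') ⊕ Unit)
        else Sum.inl (Quotient.mk _ b))
    by_cases hav : ρ.SameCycle a v
    · rw [if_pos hav, if_pos (hab'.symm.trans hav)]
    · rw [if_neg hav, if_neg (fun hbv => hav (hab'.trans hbv))]
      exact congrArg Sum.inl (Quotient.sound (hmono hab'))
  have hbij : Function.Bijective (Quotient.lift F wd) := by
    constructor
    · intro q q'
      induction q using Quotient.ind
      induction q' using Quotient.ind
      rename_i a b
      simp only [Quotient.lift_mk]
      show F a = F b → _
      simp only [F]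
      by_cases hav : ρ.SameCycle a v <;> by_cases hbv : ρ.SameCycle b v
      · intro _; exact Quotient.sound (hav.trans hbv.symm)
      · rw [if_pos hav, if_neg hbv]; intro hc; exact absurd hc (by simp)
      · rw [if_neg hav, if_pos hbv]; intro hc; exact absurd hc (by simp)
      · rw [if_neg hav, if_neg hbv]
        intro hc
        have hc' : Quotient.mk (sameCycleSetoid ρ') a = Quotient.mk (sameCycleSetoid ρ') b := by
          simpa using hc
        rcases hstruct (Quotient.exact hc') with h' | ⟨h1, h2⟩ | ⟨h1, h2⟩
        · exact Quotient.sound h'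
        · exact absurd h2.symm hbv
        · exact absurd h1 hav
    · rintro (q | ⟨⟩)
      · induction q using Quotient.ind
        rename_i w
        by_cases hwv : ρ.SameCycle w v
        · refine ⟨Quotient.mk _ u, ?_⟩
          simp only [Quotient.lift_mk]
          show F u = _
          simp only [F, if_neg h]
          exact congrArg Sum.inl (Quotient.sound (huv'.symm.trans (hmono hwv).symm))
        · refine ⟨Quotient.mk _ w, ?_⟩
          simp only [Quotient.lift_mk]
          show F w = _
          simp only [F, if_neg hwv]
      · refine ⟨Quotient.mk _ v, ?_⟩
        simp only [Quotient.lift_mk]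
        show F v = _
        simp only [F, if_pos (Equiv.Perm.SameCycle.refl ρ v)]
  have hcard := Nat.card_eq_of_bijective _ hbij
  rw [Nat.card_sum] at hcard
  simp only [Nat.card_unique] at hcard
  show numCycles ρ' + 1 = numCycles ρ
  unfold numCycles
  omega

lemma numCycles_swap_mul_le [Finite α] [DecidableEq α] (ρ : Perm α) {u v : α} (huv : u ≠ v) :
    numCycles (swap u v * ρ) ≤ numCycles ρ + 1 := by
  by_cases h : ρ.SameCycle u v
  · have h2 : ¬ (swap u v * ρ).SameCycle u v := fun hc => key_split huv h hc.symm
    have h3 := numCycles_swap_mul_of_not_sameCycle h2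
    rw [← mul_assoc, swap_mul_self, one_mul] at h3
    omega
  · have h3 := numCycles_swap_mul_of_not_sameCycle h
    omega


lemma join_rel_mul {a b : Perm α} (z : α) : (joinSetoid a b).r z ((a * b) z) := by
  rw [Equiv.Perm.mul_apply]
  exact Setoid.trans' _ (join_rel_right (sameCycle_apply b z))
    (join_rel_left (sameCycle_apply a (b z)))

lemma joinSetoid_one_left (b : Perm α) : joinSetoid 1 b = sameCycleSetoid b := by
  refine le_antisymm (sup_le (sameCycleSetoid_le ?_) le_rfl) le_sup_right
  intro z
  simp only [Equiv.Perm.one_apply]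
  exact Setoid.refl' _ z

/-- The genus-type inequality: `#a + #b + #(ab) ≤ n + 2·#(a ∨ b)`. -/
lemma master_ineq [Fintype α] [DecidableEq α] (a b : Perm α) :
    numCycles a + numCycles b + numCycles (a * b) ≤ Nat.card α + 2 * numBlocks a b := by
  generalize hc : a.support.card = n
  induction n using Nat.strong_induction_on generalizing a b with
  | _ n ih =>
  by_cases ha : a = 1
  · subst ha
    rw [one_mul, numCycles_one]
    have hb : numBlocks 1 b = numCycles b := by
      unfold numBlocks numCycles
      rw [joinSetoid_one_left]
    rw [hb]; omega
  · have hex : ∃ x, a x ≠ x := by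
      by_contra hno
      push_neg at hno
      exact ha (Equiv.ext fun x => by rw [hno x]; rfl)
    obtain ⟨x, hx⟩ := hex
    set t := swap x (a x) with ht
    set a' := t * a with ha'
    have haa' : a = t * a' := by rw [ha', ← mul_assoc, ht, swap_mul_self, one_mul]
    have hxne : x ≠ a x := fun he => hx he.symm
    have hsupp : a'.support.card < n := by
      rw [← hc]; exact Equiv.Perm.card_support_swap_mul hx
    have hfix : a' x = x := by rw [ha', Equiv.Perm.mul_apply, ht, swap_apply_right]
    have hxax : ¬ a'.SameCycle x (a x) := by
      rintro ⟨k, hk⟩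
      rw [Equiv.Perm.zpow_apply_eq_self_of_apply_eq_self hfix k] at hk
      exact hx hk.symm
    have h1 : numCycles a + 1 = numCycles a' := by
      have hD := numCycles_swap_mul_of_not_sameCycle hxax
      rwa [← ht, ← haa'] at hD
    have hIH := ih _ hsupp a' b rfl
    have hmulstep : ∀ z, (joinSetoid a' b).r z ((a' * b) z) := fun z => join_rel_mul z
    have hstep_a' : ∀ z, (joinSetoid a b).r z (a' z) := by
      intro z
      rw [ha', Equiv.Perm.mul_apply, ht]
      by_cases h1' : a z = x
      · rw [h1', swap_apply_left]
        refine Setoid.trans' _ ?_ (join_rel_left (sameCycle_apply a x))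
        have hj := join_rel_left (π := a) (σ := b) (sameCycle_apply a z)
        rwa [h1'] at hj
      · by_cases h2' : a z = a x
        · have hzx : z = x := a.injective h2'
          rw [h2', swap_apply_right, hzx]
        · rw [swap_apply_of_ne_of_ne h1' h2']
          exact join_rel_left (sameCycle_apply a z)
    have hle1 : joinSetoid a' b ≤ joinSetoid a b :=
      sup_le (sameCycleSetoid_le hstep_a') le_sup_right
    have happ : ∀ z, a z = t (a' z) := by
      intro z
      conv_lhs => rw [haa']
      rfl
    have he : swap x (a x) * (a' * b) = a * b := by
      rw [← ht, ← mul_assoc, ← haa']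
    by_cases hblock : (joinSetoid a' b).r x (a x)
    · have hstep_a : ∀ z, (joinSetoid a' b).r z (a z) := by
        intro z
        rw [happ z, ht]
        by_cases h1' : a' z = x
        · rw [h1', swap_apply_left]
          refine Setoid.trans' _ ?_ hblock
          have hj := join_rel_left (π := a') (σ := b) (sameCycle_apply a' z)
          rwa [h1'] at hj
        · by_cases h2' : a' z = a x
          · rw [h2', swap_apply_right]
            refine Setoid.trans' _ ?_ (Setoid.symm' _ hblock)
            have hj := join_rel_left (π := a') (σ := b) (sameCycle_apply a' z)
            rwa [h2'] at hj
          · rw [swap_apply_of_ne_of_ne h1' h2']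
            exact join_rel_left (sameCycle_apply a' z)
      have hle2 : joinSetoid a b ≤ joinSetoid a' b :=
        sup_le (sameCycleSetoid_le hstep_a) le_sup_right
      have hseq : numBlocks a b = numBlocks a' b := by
        unfold numBlocks; rw [le_antisymm hle2 hle1]
      by_cases hc2 : (a' * b).SameCycle x (a x)
      · have h2 : numCycles (a' * b) + 1 = numCycles (a * b) := by
          have hsp0 := key_split hxne hc2
          rw [he] at hsp0
          have hsp : ¬ (a * b).SameCycle x (a x) := fun hcc => hsp0 hcc.symm
          have hD := numCycles_swap_mul_of_not_sameCycle hsp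
          have he2 : swap x (a x) * (a * b) = a' * b := by
            rw [← he, ← mul_assoc, swap_mul_self, one_mul]
          rwa [he2] at hD
        omega
      · have h2 : numCycles (a * b) + 1 = numCycles (a' * b) := by
          have hD := numCycles_swap_mul_of_not_sameCycle hc2
          rwa [he] at hD
        omega
    · have hc2 : ¬ (a' * b).SameCycle x (a x) := fun hcc =>
        hblock (rel_of_sameCycle hmulstep hcc)
      have h2 : numCycles (a * b) + 1 = numCycles (a' * b) := by
        have hD := numCycles_swap_mul_of_not_sameCycle hc2
        rwa [he] at hD
      have hpair : numBlocks a' b ≤ numBlocks a b + 1 := by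
        apply card_quot_le_pair (u := x) (v := a x) hle1
        apply sup_le
        · apply sameCycleSetoid_le
          intro z
          show (pairJoin (joinSetoid a' b) x (a x)).r z (a z)
          rw [happ z, ht]
          by_cases h1' : a' z = x
          · rw [h1', swap_apply_left]
            refine Or.inr (Or.inl ⟨?_, Setoid.refl' _ (a x)⟩)
            have hj := join_rel_left (π := a') (σ := b) (sameCycle_apply a' z)
            rwa [h1'] at hj
          · by_cases h2' : a' z = a x
            · rw [h2', swap_apply_right]
              refine Or.inr (Or.inr ⟨?_, Setoid.refl' _ x⟩)
              have hj := join_rel_left (π := a') (σ := b) (sameCycle_apply a' z)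
              rwa [h2'] at hj
            · rw [swap_apply_of_ne_of_ne h1' h2']
              exact Or.inl (join_rel_left (sameCycle_apply a' z))
        · exact le_trans le_sup_right (le_pairJoin _ _ _)
      omega

section Restrict

variable {τ : Perm α} {p : α → Prop}

lemma restrictPerm_eq (τ : Perm α) (p : α → Prop) (hp : ∀ y, p y ↔ p (τ y)) :
    restrictPerm τ p = τ.subtypePerm (fun y => (hp y).symm) := by
  classical
  have hfr : ∀ y : {x // p x}, firstReturn τ p (y : α) = τ (y : α) := by
    rintro ⟨y, hy⟩
    unfold firstReturn
    have h1 : 1 ∈ {k : ℕ | 0 < k ∧ p ((τ ^ k) y)} := by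
      refine ⟨one_pos, ?_⟩
      rw [pow_one]
      exact (hp y).mp hy
    have hInf : sInf {k : ℕ | 0 < k ∧ p ((τ ^ k) y)} = 1 :=
      le_antisymm (Nat.sInf_le h1) (Nat.sInf_mem ⟨1, h1⟩).1
    rw [hInf, pow_one]
  have hex : ∃ e : Perm {x // p x}, ∀ y : {x // p x}, (e y : α) = firstReturn τ p (y : α) :=
    ⟨τ.subtypePerm (fun y => (hp y).symm), fun y => (hfr y).symm⟩
  unfold restrictPerm
  rw [dif_pos hex]
  ext y
  show ((hex.choose y : α)) = _
  rw [hex.choose_spec y, hfr y]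
  rfl

lemma numCycles_subtypePerm_congr (τ : Perm α) {p q : α → Prop} (hpq : ∀ y, p y ↔ q y)
    (hp : ∀ y, p y ↔ p (τ y)) (hq : ∀ y, q y ↔ q (τ y)) :
    numCycles (τ.subtypePerm (fun y => (hp y).symm)) = numCycles (τ.subtypePerm (fun y => (hq y).symm)) := by
  refine numCycles_eq_of_equiv (Equiv.subtypeEquivRight hpq) (fun x y => ?_)
  rw [Equiv.Perm.sameCycle_subtypePerm, Equiv.Perm.sameCycle_subtypePerm]
  rfl

lemma card_subtype_congr {p q : α → Prop} (hpq : ∀ y, p y ↔ q y) :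
    Nat.card {x // p x} = Nat.card {x // q x} :=
  Nat.card_congr (Equiv.subtypeEquivRight hpq)

/-- Invariance of the classes of `s` under `τ`, from the step property. -/
lemma class_inv {s : Setoid α} (hτ : ∀ z, s.r z (τ z)) (q : Quotient s) :
    ∀ y, Quotient.mk s y = q ↔ Quotient.mk s (τ y) = q := by
  intro y
  have h : Quotient.mk s (τ y) = Quotient.mk s y := Quotient.sound (s.symm' (hτ y))
  rw [h]

/-- The permutation induced by `τ` on a block of `s`. -/
noncomputable def classPerm (τ : Perm α) {s : Setoid α} (hτ : ∀ z, s.r z (τ z))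
    (q : Quotient s) : Perm {y // Quotient.mk s y = q} :=
  τ.subtypePerm (fun y => (class_inv hτ q y).symm)

lemma nat_card_sigma {ι : Type*} [Finite ι] (f : ι → Type*) [∀ i, Finite (f i)] :
    haveI := Fintype.ofFinite ι
    Nat.card ((i : ι) × f i) = ∑ i : ι, Nat.card (f i) := by
  classical
  letI := Fintype.ofFinite ι
  letI : ∀ i, Fintype (f i) := fun i => Fintype.ofFinite _
  rw [Nat.card_eq_fintype_card, Fintype.card_sigma]
  exact Finset.sum_congr rfl fun i _ => Nat.card_eq_fintype_card.symm

/-- Cycle counts add up over the blocks of any invariant partition. -/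
lemma numCycles_eq_card_sigma (τ : Perm α) (s : Setoid α) (hτ : ∀ z, s.r z (τ z)) :
    numCycles τ =
      Nat.card ((q : Quotient s) × Quotient (sameCycleSetoid (classPerm τ hτ q))) := by
  have hGen : ∀ (z : α) (q q' : Quotient s) (h : Quotient.mk s z = q)
      (h' : Quotient.mk s z = q'),
      (⟨q, Quotient.mk _ ⟨z, h⟩⟩ :
        (q : Quotient s) × Quotient (sameCycleSetoid (classPerm τ hτ q))) =
      ⟨q', Quotient.mk _ ⟨z, h'⟩⟩ := by
    intro z q q' h h'
    subst h; subst h'; rfl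
  let F : α → (q : Quotient s) × Quotient (sameCycleSetoid (classPerm τ hτ q)) :=
    fun z => ⟨Quotient.mk s z, Quotient.mk _ ⟨z, rfl⟩⟩
  have hiff : ∀ z w : α, F z = F w ↔ τ.SameCycle z w := by
    intro z w
    constructor
    · intro hzw
      have e : Quotient.mk s z = Quotient.mk s w := congrArg Sigma.fst hzw
      have h2 : F w = ⟨Quotient.mk s z, Quotient.mk _ ⟨w, e.symm⟩⟩ := hGen w _ _ rfl e.symm
      rw [h2] at hzw
      have h3 := eq_of_heq (Sigma.mk.inj_iff.mp hzw).2
      have h4 := Quotient.exact h3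
      exact Equiv.Perm.sameCycle_subtypePerm.mp h4
    · intro hzw
      have e : Quotient.mk s z = Quotient.mk s w :=
        Quotient.sound (rel_of_sameCycle hτ hzw)
      have h2 : F w = ⟨Quotient.mk s z, Quotient.mk _ ⟨w, e.symm⟩⟩ := hGen w _ _ rfl e.symm
      rw [h2]
      show (⟨Quotient.mk s z, Quotient.mk _ ⟨z, rfl⟩⟩ :
        (q : Quotient s) × Quotient (sameCycleSetoid (classPerm τ hτ q))) = _
      congr 1
      apply Quotient.sound
      exact Equiv.Perm.SameCycle.subtypePerm hzw
  have wd : ∀ a b : α, (sameCycleSetoid τ).r a b → F a = F b :=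
    fun a b hab => (hiff a b).mpr hab
  apply Nat.card_eq_of_bijective (Quotient.lift F wd)
  constructor
  · intro q q'
    induction q using Quotient.ind
    induction q' using Quotient.ind
    rename_i z w
    simp only [Quotient.lift_mk]
    intro hzw
    exact Quotient.sound ((hiff z w).mp hzw)
  · rintro ⟨q, c⟩
    induction c using Quotient.ind
    rename_i y
    obtain ⟨z, hz⟩ := y
    exact ⟨Quotient.mk _ z, hGen z _ _ rfl hz⟩

lemma card_eq_card_sigma (s : Setoid α) :
    Nat.card α = Nat.card ((q : Quotient s) × {y // Quotient.mk s y = q}) :=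
  (Nat.card_congr (Equiv.sigmaFiberEquiv (Quotient.mk s))).symm

end Restrict

section UpDown

lemma inv_pred_of_step {s : Setoid α} {τ : Perm α} (hτ : ∀ z, s.r z (τ z)) (x : α) :
    ∀ y, s.r x y ↔ s.r x (τ y) :=
  fun y => ⟨fun h => s.trans' h (hτ y), fun h => s.trans' h (s.symm' (hτ y))⟩

lemma subtypePerm_inv_mul (σ β : Perm α) {p : α → Prop} (hσ : ∀ y, p y ↔ p (σ y))
    (hβ : ∀ y, p y ↔ p (β y)) (hσβ : ∀ y, p y ↔ p ((σ⁻¹ * β) y)) :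
    (σ.subtypePerm (fun y => (hσ y).symm))⁻¹ * β.subtypePerm (fun y => (hβ y).symm) =
      (σ⁻¹ * β).subtypePerm (fun y => (hσβ y).symm) := by
  ext z
  simp [Equiv.Perm.mul_apply]
  rfl

lemma numCycles_subtypePerm_eq_classPerm (τ : Perm α) {s : Setoid α}
    (hτ : ∀ z, s.r z (τ z)) (x : α) {p : α → Prop} (hp : ∀ y, p y ↔ p (τ y))
    (hpx : ∀ y, p y ↔ Quotient.mk s y = Quotient.mk s x) :
    numCycles (τ.subtypePerm (fun y => (hp y).symm)) =
      numCycles (classPerm τ hτ (Quotient.mk s x)) := by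
  refine numCycles_eq_of_equiv (Equiv.subtypeEquivRight hpx) (fun a b => ?_)
  unfold classPerm
  simp [Equiv.Perm.sameCycle_subtypePerm, Equiv.subtypeEquivRight]
  exact Iff.rfl

lemma numCycles_classPerm_eq_one (τ : Perm α) {s : Setoid α} (hτ : ∀ z, s.r z (τ z))
    (hall : ∀ z w, s.r z w → τ.SameCycle z w) (q : Quotient s) :
    numCycles (classPerm τ hτ q) = 1 := by
  show Nat.card _ = 1
  rw [Nat.card_eq_one_iff_unique]
  constructor
  · constructor
    intro c c'
    induction c using Quotient.ind
    induction c' using Quotient.ind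
    rename_i y y'
    obtain ⟨z, hz⟩ := y
    obtain ⟨w, hw⟩ := y'
    have hrel : s.r z w := Quotient.exact (hz.trans hw.symm)
    exact Quotient.sound (Equiv.Perm.SameCycle.subtypePerm (hall z w hrel))
  · obtain ⟨z, hz⟩ := Quotient.exists_rep q
    exact ⟨Quotient.mk _ ⟨z, hz⟩⟩

lemma numCycles_eq_sum [Finite α] (τ : Perm α) (s : Setoid α) (hτ : ∀ z, s.r z (τ z))
    [Fintype (Quotient s)] :
    numCycles τ = ∑ q : Quotient s, numCycles (classPerm τ hτ q) := by
  classical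
  rw [numCycles_eq_card_sigma τ s hτ]
  letI : ∀ q : Quotient s, Fintype (Quotient (sameCycleSetoid (classPerm τ hτ q))) :=
    fun q => Fintype.ofFinite _
  rw [Nat.card_eq_fintype_card, Fintype.card_sigma]
  exact Finset.sum_congr rfl fun q _ => Nat.card_eq_fintype_card.symm

lemma card_eq_sum [Finite α] (s : Setoid α) [Fintype (Quotient s)] :
    Nat.card α = ∑ q : Quotient s, Nat.card {y // Quotient.mk s y = q} := by
  classical
  rw [card_eq_card_sigma s]
  letI : ∀ q : Quotient s, Fintype {y // Quotient.mk s y = q} :=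
    fun q => Fintype.ofFinite _
  rw [Nat.card_eq_fintype_card, Fintype.card_sigma]
  exact Finset.sum_congr rfl fun q _ => Nat.card_eq_fintype_card.symm

lemma mk_eq_iff {s : Setoid α} {x y : α} :
    s.r x y ↔ Quotient.mk s y = Quotient.mk s x :=
  ⟨fun hh => Quotient.sound (s.symm' hh), fun hh => s.symm' (Quotient.exact hh)⟩

/-- Forward direction: `π ≤ β` implies the geodesic count identity. -/
lemma count_of_le' [Finite α] {π β : Perm α} (h : le' π β) :
    numCycles π + numCycles (π⁻¹ * β) = Nat.card α + numCycles β := by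
  classical
  set s := sameCycleSetoid β with hs
  letI := Fintype.ofFinite (Quotient s)
  have hstepβ : ∀ z, s.r z (β z) := fun z => sameCycle_apply β z
  have hstepπ : ∀ z, s.r z (π z) := fun z => h.1 z (π z) (sameCycle_apply π z)
  have hinvπ : ∀ w, s.r w (π⁻¹ w) := fun w => s.symm' (by simpa using hstepπ (π⁻¹ w))
  have hstepπβ : ∀ z, s.r z ((π⁻¹ * β) z) := by
    intro z; rw [Equiv.Perm.mul_apply]; exact s.trans' (hstepβ z) (hinvπ (β z))
  have h1 := numCycles_eq_sum π s hstepπ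
  have h2 := numCycles_eq_sum (π⁻¹ * β) s hstepπβ
  have h4 := card_eq_sum (α := α) s
  have hβcard : numCycles β = Fintype.card (Quotient s) := by
    show Nat.card _ = _
    rw [Nat.card_eq_fintype_card]
  have hq : ∀ q : Quotient s,
      numCycles (classPerm π hstepπ q) + numCycles (classPerm (π⁻¹ * β) hstepπβ q) =
        Nat.card {y // Quotient.mk s y = q} + 1 := by
    intro q
    induction q using Quotient.ind
    rename_i x
    have hkey := h.2 x
    have hpπ : ∀ y, β.SameCycle x y ↔ β.SameCycle x (π y) := inv_pred_of_step hstepπ x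
    have hpβ : ∀ y, β.SameCycle x y ↔ β.SameCycle x (β y) := inv_pred_of_step hstepβ x
    have hpπβ : ∀ y, β.SameCycle x y ↔ β.SameCycle x ((π⁻¹ * β) y) :=
      inv_pred_of_step hstepπβ x
    rw [restrictPerm_eq π _ hpπ, restrictPerm_eq β _ hpβ,
        subtypePerm_inv_mul π β hpπ hpβ hpπβ] at hkey
    have hpx : ∀ y, β.SameCycle x y ↔ Quotient.mk s y = Quotient.mk s x :=
      fun y => mk_eq_iff (s := s) (x := x) (y := y)
    rw [numCycles_subtypePerm_eq_classPerm π hstepπ x hpπ hpx,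
        numCycles_subtypePerm_eq_classPerm (π⁻¹ * β) hstepπβ x hpπβ hpx,
        card_subtype_congr hpx] at hkey
    exact hkey
  rw [h1, h2, h4, hβcard, ← Finset.sum_add_distrib]
  rw [Finset.sum_congr rfl fun q _ => hq q]
  rw [Finset.sum_add_distrib]
  simp [Finset.card_univ]

/-- Backward direction: the geodesic count identity implies `σ ≤ β`. -/
lemma le'_of_count [Finite α] {σ β : Perm α}
    (hcnt : numCycles σ + numCycles (σ⁻¹ * β) = Nat.card α + numCycles β) :
    le' σ β := by
  classical
  set s := joinSetoid σ β with hs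
  letI := Fintype.ofFinite (Quotient s)
  have hstepσ : ∀ z, s.r z (σ z) := fun z => join_rel_left (sameCycle_apply σ z)
  have hstepβ : ∀ z, s.r z (β z) := fun z => join_rel_right (sameCycle_apply β z)
  have hinvσ : ∀ w, s.r w (σ⁻¹ w) := fun w => s.symm' (by simpa using hstepσ (σ⁻¹ w))
  have hstepσβ : ∀ z, s.r z ((σ⁻¹ * β) z) := by
    intro z; rw [Equiv.Perm.mul_apply]; exact s.trans' (hstepβ z) (hinvσ (β z))
  have h1 := numCycles_eq_sum σ s hstepσ
  have h2 := numCycles_eq_sum (σ⁻¹ * β) s hstepσβ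
  have h3 := numCycles_eq_sum β s hstepβ
  have h4 := card_eq_sum (α := α) s
  have hprod : ∀ q : Quotient s,
      classPerm σ hstepσ q * classPerm (σ⁻¹ * β) hstepσβ q = classPerm β hstepβ q := by
    intro q
    ext z
    show σ ((σ⁻¹ * β) (z : α)) = β (z : α)
    simp
  have hone : ∀ q : Quotient s,
      numBlocks (classPerm σ hstepσ q) (classPerm (σ⁻¹ * β) hstepσβ q) = 1 := by
    intro q
    have hT : ∀ z w : α, s.r z w → ∀ (hz : Quotient.mk s z = q) (hw : Quotient.mk s w = q),
        (joinSetoid (classPerm σ hstepσ q) (classPerm (σ⁻¹ * β) hstepσβ q)).r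
          ⟨z, hz⟩ ⟨w, hw⟩ := by
      let T : Setoid α := {
        r := fun z w => (Quotient.mk s z = q ↔ Quotient.mk s w = q) ∧
          ∀ (hz : Quotient.mk s z = q) (hw : Quotient.mk s w = q),
            (joinSetoid (classPerm σ hstepσ q) (classPerm (σ⁻¹ * β) hstepσβ q)).r
              ⟨z, hz⟩ ⟨w, hw⟩
        iseqv := by
          constructor
          · intro z
            exact ⟨Iff.rfl, fun hz hw => Setoid.refl' _ _⟩
          · rintro z w ⟨hiff, hrel⟩
            exact ⟨hiff.symm, fun hw hz => Setoid.symm' _ (hrel hz hw)⟩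
          · rintro z w v ⟨hiff1, hr1⟩ ⟨hiff2, hr2⟩
            refine ⟨hiff1.trans hiff2, fun hz hv => ?_⟩
            have hw : Quotient.mk s w = q := hiff1.mp hz
            exact Setoid.trans' _ (hr1 hz hw) (hr2 hw hv) }
      have hstepA : ∀ z, T.r z (σ z) := by
        intro z
        refine ⟨class_inv hstepσ q z, fun hz hw => ?_⟩
        have hj := join_rel_left (π := classPerm σ hstepσ q)
          (σ := classPerm (σ⁻¹ * β) hstepσβ q)
          (sameCycle_apply (classPerm σ hstepσ q) ⟨z, hz⟩)
        have hA : classPerm σ hstepσ q ⟨z, hz⟩ = ⟨σ z, hw⟩ := Subtype.ext rfl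
        rwa [hA] at hj
      have hstepB : ∀ z, T.r z (β z) := by
        intro z
        refine ⟨class_inv hstepβ q z, fun hz hw => ?_⟩
        have hj := join_rel_mul (a := classPerm σ hstepσ q)
          (b := classPerm (σ⁻¹ * β) hstepσβ q) (⟨z, hz⟩ : {y // Quotient.mk s y = q})
        have hAB : (classPerm σ hstepσ q * classPerm (σ⁻¹ * β) hstepσβ q) ⟨z, hz⟩ =
            ⟨β z, hw⟩ := by
          rw [hprod q]
          exact Subtype.ext rfl
        rwa [hAB] at hj
      have hle : s ≤ T := sup_le (sameCycleSetoid_le hstepA) (sameCycleSetoid_le hstepB)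
      intro z w hzw
      exact (Setoid.le_def.mp hle hzw).2
    show Nat.card _ = 1
    rw [Nat.card_eq_one_iff_unique]
    constructor
    · constructor
      intro c c'
      induction c using Quotient.ind
      induction c' using Quotient.ind
      rename_i y y'
      obtain ⟨z, hz⟩ := y
      obtain ⟨w, hw⟩ := y'
      exact Quotient.sound (hT z w (Quotient.exact (hz.trans hw.symm)) hz hw)
    · obtain ⟨z, hz⟩ := Quotient.exists_rep q
      exact ⟨Quotient.mk _ ⟨z, hz⟩⟩
  have hM : ∀ q : Quotient s,
      numCycles (classPerm σ hstepσ q) + numCycles (classPerm (σ⁻¹ * β) hstepσβ q) +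
        numCycles (classPerm β hstepβ q) ≤ Nat.card {y // Quotient.mk s y = q} + 2 := by
    intro q
    letI : Fintype {y // Quotient.mk s y = q} := Fintype.ofFinite _
    letI : DecidableEq {y // Quotient.mk s y = q} := Classical.decEq _
    have hMq := master_ineq (classPerm σ hstepσ q) (classPerm (σ⁻¹ * β) hstepσβ q)
    rw [hprod q, hone q] at hMq
    omega
  have hcB : numBlocks σ β = Fintype.card (Quotient s) := Nat.card_eq_fintype_card
  have hglob : ∑ q : Quotient s, (numCycles (classPerm σ hstepσ q) +
      numCycles (classPerm (σ⁻¹ * β) hstepσβ q) + numCycles (classPerm β hstepβ q)) =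
      ∑ q : Quotient s, (Nat.card {y // Quotient.mk s y = q} + 2) := by
    have hcle : numBlocks σ β ≤ numCycles β :=
      card_quot_le_of_le (le_sup_right (a := sameCycleSetoid σ) (b := sameCycleSetoid β))
    have hsumf : ∑ q : Quotient s, (numCycles (classPerm σ hstepσ q) +
        numCycles (classPerm (σ⁻¹ * β) hstepσβ q) + numCycles (classPerm β hstepβ q)) =
        numCycles σ + numCycles (σ⁻¹ * β) + numCycles β := by
      rw [h1, h2, h3, ← Finset.sum_add_distrib, ← Finset.sum_add_distrib]
    have hsumg : ∑ q : Quotient s, (Nat.card {y // Quotient.mk s y = q} + 2) =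
        Nat.card α + 2 * numBlocks σ β := by
      rw [Finset.sum_add_distrib, ← h4, Finset.sum_const, Finset.card_univ, ← hcB]
      ring
    have hle' : ∑ q : Quotient s, (numCycles (classPerm σ hstepσ q) +
        numCycles (classPerm (σ⁻¹ * β) hstepσβ q) + numCycles (classPerm β hstepβ q)) ≤
        ∑ q : Quotient s, (Nat.card {y // Quotient.mk s y = q} + 2) :=
      Finset.sum_le_sum fun q _ => hM q
    rw [hsumf, hsumg]
    omega
  -- from the global equality, the number of blocks equals the number of cycles of β
  have hceq : numBlocks σ β = numCycles β := by
    have hcle : numBlocks σ β ≤ numCycles β :=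
      card_quot_le_of_le (le_sup_right (a := sameCycleSetoid σ) (b := sameCycleSetoid β))
    have hsumf : ∑ q : Quotient s, (numCycles (classPerm σ hstepσ q) +
        numCycles (classPerm (σ⁻¹ * β) hstepσβ q) + numCycles (classPerm β hstepβ q)) =
        numCycles σ + numCycles (σ⁻¹ * β) + numCycles β := by
      rw [h1, h2, h3, ← Finset.sum_add_distrib, ← Finset.sum_add_distrib]
    have hsumg : ∑ q : Quotient s, (Nat.card {y // Quotient.mk s y = q} + 2) =
        Nat.card α + 2 * numBlocks σ β := by
      rw [Finset.sum_add_distrib, ← h4, Finset.sum_const, Finset.card_univ, ← hcB]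
      ring
    rw [hsumf, hsumg] at hglob
    omega
  have hinj : ∀ z w : α, s.r z w → β.SameCycle z w := by
    have wd : ∀ a b : α, (sameCycleSetoid β).r a b → Quotient.mk s a = Quotient.mk s b :=
      fun a b hab => Quotient.sound (Setoid.le_def.mp
        (le_sup_right (a := sameCycleSetoid σ) (b := sameCycleSetoid β)) hab)
    have hsurj : Function.Surjective (Quotient.lift (Quotient.mk s) wd) := by
      intro q
      induction q using Quotient.ind
      rename_i z
      exact ⟨Quotient.mk _ z, rfl⟩
    have hbij : Function.Bijective (Quotient.lift (Quotient.mk s) wd) :=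
      hsurj.bijective_of_nat_card_le (le_of_eq hceq.symm)
    intro z w hzw
    have hmk : Quotient.mk s z = Quotient.mk s w := Quotient.sound hzw
    have hmk2 : Quotient.mk (sameCycleSetoid β) z = Quotient.mk (sameCycleSetoid β) w :=
      hbij.1 (by simpa using hmk)
    exact Quotient.exact hmk2
  have hcomp1 : ∀ x y : α, σ.SameCycle x y → β.SameCycle x y :=
    fun x y hxy => hinj x y (join_rel_left hxy)
  have hβone : ∀ q, numCycles (classPerm β hstepβ q) = 1 :=
    fun q => numCycles_classPerm_eq_one β hstepβ hinj q
  have hsq : ∀ q : Quotient s,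
      numCycles (classPerm σ hstepσ q) + numCycles (classPerm (σ⁻¹ * β) hstepσβ q) =
        Nat.card {y // Quotient.mk s y = q} + 1 := by
    have hptw : ∀ q : Quotient s, numCycles (classPerm σ hstepσ q) +
        numCycles (classPerm (σ⁻¹ * β) hstepσβ q) + numCycles (classPerm β hstepβ q) =
        Nat.card {y // Quotient.mk s y = q} + 2 := by
      by_contra hcon
      push_neg at hcon
      obtain ⟨q0, hq0⟩ := hcon
      have hlt : numCycles (classPerm σ hstepσ q0) +
          numCycles (classPerm (σ⁻¹ * β) hstepσβ q0) + numCycles (classPerm β hstepβ q0) <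
          Nat.card {y // Quotient.mk s y = q0} + 2 := lt_of_le_of_ne (hM q0) hq0
      have := Finset.sum_lt_sum (fun q _ => hM q) ⟨q0, Finset.mem_univ q0, hlt⟩
      omega
    intro q
    have := hptw q
    have hb := hβone q
    omega
  refine ⟨hcomp1, fun x => ?_⟩
  have hpσ : ∀ y, β.SameCycle x y ↔ β.SameCycle x (σ y) := by
    intro y
    have hy : β.SameCycle y (σ y) := hcomp1 y (σ y) (sameCycle_apply σ y)
    exact ⟨fun hh => hh.trans hy, fun hh => hh.trans hy.symm⟩
  have hpβ : ∀ y, β.SameCycle x y ↔ β.SameCycle x (β y) := by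
    intro y
    have hy : β.SameCycle y (β y) := sameCycle_apply β y
    exact ⟨fun hh => hh.trans hy, fun hh => hh.trans hy.symm⟩
  have hpσβ : ∀ y, β.SameCycle x y ↔ β.SameCycle x ((σ⁻¹ * β) y) := by
    intro y
    have hy : β.SameCycle y ((σ⁻¹ * β) y) := hinj _ _ (hstepσβ y)
    exact ⟨fun hh => hh.trans hy, fun hh => hh.trans hy.symm⟩
  rw [restrictPerm_eq σ _ hpσ, restrictPerm_eq β _ hpβ,
      subtypePerm_inv_mul σ β hpσ hpβ hpσβ]
  have hpx : ∀ y, β.SameCycle x y ↔ Quotient.mk s y = Quotient.mk s x := by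
    intro y
    constructor
    · intro hh
      exact Quotient.sound (s.symm' (join_rel_right hh))
    · intro hh
      exact hinj x y (s.symm' (Quotient.exact hh))
  rw [numCycles_subtypePerm_eq_classPerm σ hstepσ x hpσ hpx,
      numCycles_subtypePerm_eq_classPerm (σ⁻¹ * β) hstepσβ x hpσβ hpx,
      card_subtype_congr hpx]
  exact hsq (Quotient.mk s x)

/-- Summing the annular non-crossing conditions over the blocks of `π ∨ γ`. -/
lemma count_of_ncRel [Finite α] {π γ : Perm α} (hπ : ncRel π γ) :
    numCycles π + numCycles (π⁻¹ * γ) + numCycles γ =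
      Nat.card α + 2 * numBlocks π γ := by
  classical
  set s := joinSetoid π γ with hs
  letI := Fintype.ofFinite (Quotient s)
  have hstepπ : ∀ z, s.r z (π z) := fun z => join_rel_left (sameCycle_apply π z)
  have hstepγ : ∀ z, s.r z (γ z) := fun z => join_rel_right (sameCycle_apply γ z)
  have hinvπ : ∀ w, s.r w (π⁻¹ w) := fun w => s.symm' (by simpa using hstepπ (π⁻¹ w))
  have hstepπγ : ∀ z, s.r z ((π⁻¹ * γ) z) := by
    intro z; rw [Equiv.Perm.mul_apply]; exact s.trans' (hstepγ z) (hinvπ (γ z))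
  have h1 := numCycles_eq_sum π s hstepπ
  have h2 := numCycles_eq_sum (π⁻¹ * γ) s hstepπγ
  have h3 := numCycles_eq_sum γ s hstepγ
  have h4 := card_eq_sum (α := α) s
  have hcB : numBlocks π γ = Fintype.card (Quotient s) := Nat.card_eq_fintype_card
  have hq : ∀ q : Quotient s,
      numCycles (classPerm π hstepπ q) + numCycles (classPerm (π⁻¹ * γ) hstepπγ q) +
        numCycles (classPerm γ hstepγ q) = Nat.card {y // Quotient.mk s y = q} + 2 := by
    intro q
    induction q using Quotient.ind
    rename_i x
    have hkey := (hπ x).2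
    have hpπ : ∀ y, (joinSetoid π γ).r x y ↔ (joinSetoid π γ).r x (π y) :=
      inv_pred_of_step hstepπ x
    have hpγ : ∀ y, (joinSetoid π γ).r x y ↔ (joinSetoid π γ).r x (γ y) :=
      inv_pred_of_step hstepγ x
    have hpπγ : ∀ y, (joinSetoid π γ).r x y ↔ (joinSetoid π γ).r x ((π⁻¹ * γ) y) :=
      inv_pred_of_step hstepπγ x
    rw [restrictPerm_eq π _ hpπ, restrictPerm_eq γ _ hpγ,
        subtypePerm_inv_mul π γ hpπ hpγ hpπγ] at hkey
    have hpx : ∀ y, (joinSetoid π γ).r x y ↔ Quotient.mk s y = Quotient.mk s x :=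
      fun y => mk_eq_iff (s := s) (x := x) (y := y)
    rw [numCycles_subtypePerm_eq_classPerm π hstepπ x hpπ hpx,
        numCycles_subtypePerm_eq_classPerm (π⁻¹ * γ) hstepπγ x hpπγ hpx,
        numCycles_subtypePerm_eq_classPerm γ hstepγ x hpγ hpx,
        card_subtype_congr hpx] at hkey
    exact hkey
  rw [h1, h2, h3, h4, hcB, ← Finset.sum_add_distrib, ← Finset.sum_add_distrib]
  rw [Finset.sum_congr rfl fun q _ => hq q, Finset.sum_add_distrib]
  simp [Finset.card_univ, mul_comm]

end UpDown

end Aux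

/-- if `π ≲ γ`, `σ ≲ γ`, `π ∨ γ = σ ∨ γ` and `π ≤ σ⁻¹γ`, then
`σ ≤ γπ⁻¹`. -/
theorem stmt5 {r : ℕ} (m : Fin r → ℕ)
    (γ : Equiv.Perm ((i : Fin r) × Fin (m i))) (hγ : γ = blockRotate m)
    (π σ : Equiv.Perm ((i : Fin r) × Fin (m i)))
    (hπ : ncRel π γ) (hσ : ncRel σ γ)
    (hjoin : ∀ x y, (joinSetoid π γ).r x y ↔ (joinSetoid σ γ).r x y)
    (h : le' π (σ⁻¹ * γ)) :
    le' σ (γ * π⁻¹) := by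
  have hP := count_of_ncRel hπ
  have hS := count_of_ncRel hσ
  have hjoineq : joinSetoid π γ = joinSetoid σ γ := Setoid.ext fun a b => hjoin a b
  have hblocks : numBlocks π γ = numBlocks σ γ := by
    unfold numBlocks; rw [hjoineq]
  have hH := count_of_le' h
  have hc1 : numCycles (γ * π⁻¹) = numCycles (π⁻¹ * γ) := by
    have hcj := numCycles_conj γ (π⁻¹ * γ)
    rwa [show γ * (π⁻¹ * γ) * γ⁻¹ = γ * π⁻¹ by group] at hcj
  have hc2 : numCycles (σ⁻¹ * (γ * π⁻¹)) = numCycles (π⁻¹ * (σ⁻¹ * γ)) := by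
    have hcj := numCycles_conj π (π⁻¹ * (σ⁻¹ * γ))
    rwa [show π * (π⁻¹ * (σ⁻¹ * γ)) * π⁻¹ = σ⁻¹ * (γ * π⁻¹) by group] at hcj
  apply le'_of_count
  rw [hc1, hc2]
  omega

end ThirdOrderFree
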